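/- arXiv:1104.2699 — 3 statements merged into one kernel-verified Lean document; each statement's English description precedes it below -/
import Mathlib

section
/- q-Cassini formula: F_{n-1}(x,qs,q) F_{n+1}(x,s,q) - F_n(x,s,q) F_n(x,qs,q) = (-1)^n q^{n(n-1)/2} s^{n-1} for n ≥ 1. -/
def carlitzFib {R : Type*} [CommRing R] (x q : R) : ℕ → R → R
  | 0, _ => 0
  | 1, _ => 1
  | n + 2, s => x * carlitzFib x q (n + 1) (q * s) + q * s * carlitzFib x q n (q ^ 2 * s)

lemma q_cassini_aux {R : Type*} [CommRing R] (x q : R) :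
    ∀ k (s : R), carlitzFib x q k (q * s) * carlitzFib x q (k + 2) s -
      carlitzFib x q (k + 1) s * carlitzFib x q (k + 1) (q * s) =
      (-1) ^ (k + 1) * q ^ ((k + 1) * k / 2) * s ^ k := by
  intro k
  induction k with
  | zero => intro s; simp [carlitzFib]
  | succ k ih =>
    intro s
    have h1 : carlitzFib x q (k + 3) s =
        x * carlitzFib x q (k + 2) (q * s) + q * s * carlitzFib x q (k + 1) (q ^ 2 * s) := rfl
    have h2 : carlitzFib x q (k + 2) s =
        x * carlitzFib x q (k + 1) (q * s) + q * s * carlitzFib x q k (q ^ 2 * s) := rfl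
    have h3 := ih (q * s)
    have hq : q * (q * s) = q ^ 2 * s := by ring
    rw [hq] at h3
    have hm : (k + 1 + 1) * (k + 1) = (k + 1) * k + 2 * (k + 1) := by ring
    have hexp : (k + 1 + 1) * (k + 1) / 2 = (k + 1) * k / 2 + (k + 1) := by omega
    show carlitzFib x q (k + 1) (q * s) * carlitzFib x q (k + 3) s -
      carlitzFib x q (k + 2) s * carlitzFib x q (k + 2) (q * s) = _
    rw [h1, h2, hexp]
    linear_combination (-(q * s)) * h3

theorem q_cassini {R : Type*} [CommRing R] (x q s : R) (n : ℕ) (hn : 1 ≤ n) :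
    carlitzFib x q (n - 1) (q * s) * carlitzFib x q (n + 1) s -
      carlitzFib x q n s * carlitzFib x q n (q * s) =
      (-1) ^ n * q ^ (n * (n - 1) / 2) * s ^ (n - 1) := by
  obtain ⟨k, rfl⟩ : ∃ k, n = k + 1 := ⟨n - 1, by omega⟩
  simpa using q_cassini_aux x q k s
end

section
/- The addition formula F_{m+n}(x,s,q) = q^n s F_{m-1}(x,q^{n+1}s,q) F_n(x,s,q) + F_m(x,q^n s,q) F_{n+1}(x,s,q) holds for all m ≥ 1, n ≥ 0. -/
lemma carlitzFib_rec {R : Type*} [CommRing R] (x q : R) :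
    ∀ n (s : R), carlitzFib x q (n + 2) s =
      x * carlitzFib x q (n + 1) s + q ^ n * s * carlitzFib x q n s
  | 0, s => by simp [carlitzFib]
  | 1, s => by simp [carlitzFib]
  | (n + 2), s => by
    have h1 := carlitzFib_rec x q (n + 1) (q * s)
    have h2 := carlitzFib_rec x q n (q ^ 2 * s)
    have e : carlitzFib x q (n + 4) s =
        x * carlitzFib x q (n + 3) (q * s) + q * s * carlitzFib x q (n + 2) (q ^ 2 * s) := by
      simp only [carlitzFib]
    rw [show n + 2 + 2 = n + 4 from rfl, e, h1, h2,
      show carlitzFib x q (n + 2 + 1) s = carlitzFib x q (n + 1 + 2) s from rfl,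
      show carlitzFib x q (n + 2) s = carlitzFib x q (n + 2) s from rfl]
    have e3 : carlitzFib x q (n + 1 + 2) s =
        x * carlitzFib x q (n + 2) (q * s) + q * s * carlitzFib x q (n + 1) (q ^ 2 * s) := by
      simp only [carlitzFib]
    have e4 : carlitzFib x q (n + 2) s =
        x * carlitzFib x q (n + 1) (q * s) + q * s * carlitzFib x q n (q ^ 2 * s) := by
      simp only [carlitzFib]
    rw [e3, e4]
    ring

lemma q_fib_add_aux {R : Type*} [CommRing R] (x q : R) :
    ∀ n k (s : R), carlitzFib x q (k + 1 + n) s =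
      q ^ n * s * carlitzFib x q k (q ^ (n + 1) * s) * carlitzFib x q n s +
        carlitzFib x q (k + 1) (q ^ n * s) * carlitzFib x q (n + 1) s := by
  intro n
  induction n with
  | zero => intro k s; simp [carlitzFib]
  | succ n ih =>
    intro k s
    have h := ih (k + 1) s
    rw [show k + 1 + (n + 1) = k + 1 + 1 + n from by omega, h]
    have e : carlitzFib x q (k + 2) (q ^ n * s) =
        x * carlitzFib x q (k + 1) (q * (q ^ n * s)) +
          q * (q ^ n * s) * carlitzFib x q k (q ^ 2 * (q ^ n * s)) := by
      simp only [carlitzFib]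
    have e1 : q * (q ^ n * s) = q ^ (n + 1) * s := by ring
    have e2 : q ^ 2 * (q ^ n * s) = q ^ (n + 1 + 1) * s := by ring
    rw [show k + 1 + 1 = k + 2 from rfl, e, e1, e2, carlitzFib_rec x q n s]
    ring

theorem q_fib_add {R : Type*} [CommRing R] (x q s : R) (m n : ℕ) (hm : 1 ≤ m) :
    carlitzFib x q (m + n) s =
      q ^ n * s * carlitzFib x q (m - 1) (q ^ (n + 1) * s) * carlitzFib x q n s +
        carlitzFib x q m (q ^ n * s) * carlitzFib x q (n + 1) s := by
  obtain ⟨k, rfl⟩ := Nat.exists_eq_add_of_le hm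
  simpa [Nat.add_comm 1 k] using q_fib_add_aux x q n k s
end

section
/- The q-Lucas polynomial identity x L_n(x,qs,q) = F_{n+2}(x,s,q) - q^{n+1} s² F_{n-2}(x,q²s,q) holds for n ≥ 2, where L_n(x,s,q) = F_{n+1}(x,s,q) + s F_{n-1}(x,qs,q). -/
def qLucas {R : Type*} [CommRing R] (x q : R) (n : ℕ) (s : R) : R :=
  carlitzFib x q (n + 1) s + s * carlitzFib x q (n - 1) (q * s)

lemma carlitzFib_same_arg {R : Type*} [CommRing R] (x q : R) :
    ∀ m : ℕ, ∀ s : R, carlitzFib x q (m + 2) s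
      = x * carlitzFib x q (m + 1) s + q ^ m * s * carlitzFib x q m s := by
  intro m
  induction m using Nat.strong_induction_on with
  | _ m ih =>
    match m with
    | 0 => intro s; simp [carlitzFib]
    | 1 => intro s; simp [carlitzFib]
    | m + 2 =>
      intro s
      have h1 := ih (m + 1) (by omega) (q * s)
      have h2 := ih m (by omega) (q ^ 2 * s)
      show x * carlitzFib x q (m + 3) (q * s) + q * s * carlitzFib x q (m + 2) (q ^ 2 * s) = _
      rw [h1, h2]
      show _ = x * (x * carlitzFib x q (m + 2) (q * s) + q * s * carlitzFib x q (m + 1) (q ^ 2 * s))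
          + q ^ (m + 2) * s * (x * carlitzFib x q (m + 1) (q * s) + q * s * carlitzFib x q m (q ^ 2 * s))
      ring

theorem q_lucas_identity {R : Type*} [CommRing R] (x q s : R) (n : ℕ) (hn : 2 ≤ n) :
    x * qLucas x q n (q * s) =
      carlitzFib x q (n + 2) s - q ^ (n + 1) * s ^ 2 * carlitzFib x q (n - 2) (q ^ 2 * s) := by
  obtain ⟨k, rfl⟩ : ∃ k, n = k + 2 := ⟨n - 2, by omega⟩
  simp only [qLucas, Nat.add_sub_cancel, show k + 2 - 1 = k + 1 from rfl]
  have harg : q * (q * s) = q ^ 2 * s := by ring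
  rw [harg]
  show x * (carlitzFib x q (k + 3) (q * s) + q * s * carlitzFib x q (k + 1) (q ^ 2 * s))
    = x * carlitzFib x q (k + 3) (q * s) + q * s * carlitzFib x q (k + 2) (q ^ 2 * s)
      - q ^ (k + 3) * s ^ 2 * carlitzFib x q k (q ^ 2 * s)
  rw [carlitzFib_same_arg x q k (q ^ 2 * s)]
  ring
end
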